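/- Let H be an infinite-dimensional Hilbert space over ℝ or ℂ, with unit sphere S_H carrying the kernel k(x,y) := ‖x−y‖. Then the rendezvous and average intervals of S_H both reduce to the single point √2: M(S_H) = M̄(S_H) = q̲(S_H,S_H) = q(S_H,S_H) = √2; that is, 𝓐(H) = 𝓡(H) = {√2}. -/

import Mathlib

open MeasureTheory ENNReal
open scoped BigOperators

namespace Rendezvous

variable {X : Type*}

/-- The `n`-th Chebyshev constant `Mₙ(H,L)` of `L` with respect to `H` for the kernel `k`. -/
noncomputable def chebMn (k : X → X → ℝ≥0∞) (n : ℕ) (H L : Set X) : ℝ≥0∞ :=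
  ⨆ w : Fin n → H, ⨅ x : L, (∑ j, k (x : X) ((w j : X))) / (n : ℝ≥0∞)

/-- The `n`-th dual Chebyshev constant `M̄ₙ(H,L)`. -/
noncomputable def chebMnDual (k : X → X → ℝ≥0∞) (n : ℕ) (H L : Set X) : ℝ≥0∞ :=
  ⨅ w : Fin n → H, ⨆ x : L, (∑ j, k (x : X) ((w j : X))) / (n : ℝ≥0∞)

/-- The Chebyshev constant `M(H,L) = sup_{n ≥ 1} Mₙ(H,L)`. -/
noncomputable def chebM (k : X → X → ℝ≥0∞) (H L : Set X) : ℝ≥0∞ :=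
  ⨆ n : ℕ, ⨆ (_ : 1 ≤ n), chebMn k n H L

/-- The dual Chebyshev constant `M̄(H,L) = inf_{n ≥ 1} M̄ₙ(H,L)`. -/
noncomputable def chebMDual (k : X → X → ℝ≥0∞) (H L : Set X) : ℝ≥0∞ :=
  ⨅ n : ℕ, ⨅ (_ : 1 ≤ n), chebMnDual k n H L

/-- The potential `U^μ(x) = ∫ k(x,y) dμ(y)` of a measure. -/
noncomputable def pot [MeasurableSpace X] (k : X → X → ℝ≥0∞) (μ : Measure X) (x : X) : ℝ≥0∞ :=
  ∫⁻ y, k x y ∂μ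

/-- `μ` is a tight (inner regular w.r.t. compact sets) Borel probability measure
concentrated on `H`. -/
def TightProbOn [TopologicalSpace X] [MeasurableSpace X] (μ : Measure X) (H : Set X) : Prop :=
  IsProbabilityMeasure μ ∧ μ.InnerRegular ∧ μ Hᶜ = 0

/-- The quasi-uniform energy `q(H,L) = inf_{μ ∈ M₁(H)} sup_{x ∈ L} U^μ(x)`. -/
noncomputable def qUp [TopologicalSpace X] [MeasurableSpace X] (k : X → X → ℝ≥0∞)
    (H L : Set X) : ℝ≥0∞ :=
  ⨅ (μ : Measure X) (_ : TightProbOn μ H), ⨆ x : L, pot k μ (x : X)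

/-- The dual quasi-uniform energy `q̲(H,L) = sup_{μ ∈ M₁(H)} inf_{x ∈ L} U^μ(x)`. -/
noncomputable def qLow [TopologicalSpace X] [MeasurableSpace X] (k : X → X → ℝ≥0∞)
    (H L : Set X) : ℝ≥0∞ :=
  ⨆ (μ : Measure X) (_ : TightProbOn μ H), ⨅ x : L, pot k μ (x : X)

end Rendezvous

open Rendezvous

/-! ### Auxiliary lemmas -/

section RendezvousAux

open Metric

lemma rv_sqrt2_le_two : Real.sqrt 2 ≤ 2 := by
  nlinarith [Real.sq_sqrt (by norm_num : (0:ℝ) ≤ 2), Real.sqrt_nonneg 2]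

lemma rv_one_le_sqrt2 : (1:ℝ) ≤ Real.sqrt 2 := by
  nlinarith [Real.sq_sqrt (by norm_num : (0:ℝ) ≤ 2), Real.sqrt_nonneg 2]

lemma rv_sqrt_lb {t : ℝ} (ht : t ≤ 1) :
    Real.sqrt 2 * (1 - max t 0) ≤ Real.sqrt (2 - 2 * t) := by
  rcases le_or_gt t 0 with h | h
  · rw [max_eq_right h]
    have := Real.sqrt_le_sqrt (show (2:ℝ) ≤ 2 - 2*t by linarith)
    simpa using this
  · rw [max_eq_left h.le]
    have h1 : (0:ℝ) ≤ 1 - t := by linarith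
    calc Real.sqrt 2 * (1 - t) = Real.sqrt (2 * (1 - t)^2) := by
          rw [Real.sqrt_mul (by norm_num), Real.sqrt_sq h1]
      _ ≤ Real.sqrt (2 - 2*t) := Real.sqrt_le_sqrt (by nlinarith)

lemma rv_sqrt_ub {t : ℝ} (ht : t ≤ 1) :
    Real.sqrt (2 - 2*t) ≤ Real.sqrt 2 * (1 - t/2) := by
  have h1 : (0:ℝ) ≤ 1 - t/2 := by linarith
  calc Real.sqrt (2 - 2*t) ≤ Real.sqrt (2 * (1 - t/2)^2) :=
        Real.sqrt_le_sqrt (by nlinarith [sq_nonneg t])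
    _ = Real.sqrt 2 * (1 - t/2) := by rw [Real.sqrt_mul (by norm_num), Real.sqrt_sq h1]

lemma rv_ofReal_eps_le {δ : NNReal} (hδ : 0 < δ) :
    ENNReal.ofReal (min ((δ:ℝ)/2) (1/2)) ≤ (δ : ℝ≥0∞) := by
  calc ENNReal.ofReal (min ((δ:ℝ)/2) (1/2)) ≤ ENNReal.ofReal (δ:ℝ) :=
      ENNReal.ofReal_le_ofReal (le_trans (min_le_left _ _) (by linarith [δ.coe_nonneg]))
    _ = (δ : ℝ≥0∞) := ENNReal.ofReal_coe_nnreal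

lemma rv_helper_ub {A : ℝ≥0∞}
    (h : ∀ ε : ℝ, 0 < ε → ε < 1 → A ≤ ENNReal.ofReal (Real.sqrt 2 + ε)) :
    A ≤ ENNReal.ofReal (Real.sqrt 2) := by
  refine ENNReal.le_of_forall_pos_le_add fun δ hδ _ => ?_
  have hε0 : 0 < min ((δ:ℝ)/2) (1/2) := lt_min (by positivity) (by norm_num)
  have hε1 : min ((δ:ℝ)/2) (1/2) < 1 := lt_of_le_of_lt (min_le_right _ _) (by norm_num)
  calc A ≤ ENNReal.ofReal (Real.sqrt 2 + min ((δ:ℝ)/2) (1/2)) := h _ hε0 hε1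
    _ ≤ ENNReal.ofReal (Real.sqrt 2) + ENNReal.ofReal (min ((δ:ℝ)/2) (1/2)) :=
        ENNReal.ofReal_add_le
    _ ≤ ENNReal.ofReal (Real.sqrt 2) + δ := add_le_add (le_refl _) (rv_ofReal_eps_le hδ)

lemma rv_helper_lb {A : ℝ≥0∞}
    (h : ∀ ε : ℝ, 0 < ε → ε < 1 → ENNReal.ofReal (Real.sqrt 2 - ε) ≤ A) :
    ENNReal.ofReal (Real.sqrt 2) ≤ A := by
  refine ENNReal.le_of_forall_pos_le_add fun δ hδ _ => ?_
  have hε0 : 0 < min ((δ:ℝ)/2) (1/2) := lt_min (by positivity) (by norm_num)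
  have hε1 : min ((δ:ℝ)/2) (1/2) < 1 := lt_of_le_of_lt (min_le_right _ _) (by norm_num)
  calc ENNReal.ofReal (Real.sqrt 2)
      = ENNReal.ofReal ((Real.sqrt 2 - min ((δ:ℝ)/2) (1/2)) + min ((δ:ℝ)/2) (1/2)) := by
        ring_nf
    _ ≤ ENNReal.ofReal (Real.sqrt 2 - min ((δ:ℝ)/2) (1/2))
        + ENNReal.ofReal (min ((δ:ℝ)/2) (1/2)) := ENNReal.ofReal_add_le
    _ ≤ A + δ := add_le_add (h _ hε0 hε1) (rv_ofReal_eps_le hδ)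

lemma rv_exists_n_sqrt (ε : ℝ) (hε : 0 < ε) :
    ∃ n : ℕ, 1 ≤ n ∧ Real.sqrt 2 / Real.sqrt n ≤ ε := by
  obtain ⟨N, hN⟩ := exists_nat_ge (2 / ε^2)
  refine ⟨N + 1, Nat.succ_le_succ (Nat.zero_le N), ?_⟩
  have hcast : ((N + 1 : ℕ) : ℝ) = (N : ℝ) + 1 := by push_cast; ring
  have hpos : (0:ℝ) < Real.sqrt ((N + 1 : ℕ) : ℝ) := Real.sqrt_pos.mpr (by rw [hcast]; positivity)
  rw [div_le_iff₀ hpos]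
  have hsq : Real.sqrt (((N+1 : ℕ)) : ℝ) ^ 2 = ((N:ℝ)+1) := by
    rw [Real.sq_sqrt (by rw [hcast]; positivity), hcast]
  have hy : (0:ℝ) ≤ ε * Real.sqrt ((N+1 : ℕ) : ℝ) := by positivity
  have h2 : (2:ℝ) ≤ (ε * Real.sqrt ((N+1:ℕ) : ℝ))^2 := by
    have h3 : 2/ε^2 ≤ (N:ℝ)+1 := by linarith
    calc (2:ℝ) = ε^2 * (2/ε^2) := by field_simp
      _ ≤ ε^2 * ((N:ℝ)+1) := mul_le_mul_of_nonneg_left h3 (sq_nonneg ε)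
      _ = (ε * Real.sqrt ((N+1:ℕ) : ℝ))^2 := by rw [mul_pow, hsq]
  have h6 := Real.sqrt_le_sqrt h2
  rwa [Real.sqrt_sq hy] at h6

section InnerSpace

variable {𝕜 H : Type*} [RCLike 𝕜] [NormedAddCommGroup H] [InnerProductSpace 𝕜 H]
  [CompleteSpace H]

local notation "⟪" x ", " y "⟫" => @inner 𝕜 _ _ x y

lemma rv_exists_unit_perp (hinf : ¬ FiniteDimensional 𝕜 H) {s : Set H} (hs : s.Finite) :
    ∃ x : H, ‖x‖ = 1 ∧ ∀ c ∈ s, ⟪c, x⟫ = 0 := by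
  have hfd : FiniteDimensional 𝕜 (Submodule.span 𝕜 s) := FiniteDimensional.span_of_finite 𝕜 hs
  set K : Submodule 𝕜 H := Submodule.span 𝕜 s with hKdef
  have hbot : Kᗮ ≠ ⊥ := by
    intro h
    apply hinf
    have hKtop : K = ⊤ := Submodule.orthogonal_eq_bot_iff.mp h
    have : FiniteDimensional 𝕜 (⊤ : Submodule 𝕜 H) := hKtop ▸ hfd
    exact Submodule.topEquiv.finiteDimensional
  obtain ⟨v, hvK, hv0⟩ := (Submodule.ne_bot_iff _).mp hbot
  have hvn : (0:ℝ) < ‖v‖ := norm_pos_iff.mpr hv0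
  refine ⟨((‖v‖ : 𝕜)⁻¹) • v, ?_, ?_⟩
  · rw [norm_smul, norm_inv, RCLike.norm_ofReal, abs_of_pos hvn, inv_mul_cancel₀ hvn.ne']
  · intro c hc
    rw [inner_smul_right, (Submodule.mem_orthogonal K v).mp hvK c (Submodule.subset_span hc),
      mul_zero]

lemma rv_exists_orthonormal (hinf : ¬ FiniteDimensional 𝕜 H) (n : ℕ) :
    ∃ e : Fin n → H, Orthonormal 𝕜 e := by
  induction n with
  | zero => exact ⟨fun i => i.elim0, ⟨fun i => i.elim0, fun i => i.elim0⟩⟩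
  | succ n ih =>
    obtain ⟨e, he⟩ := ih
    obtain ⟨x, hx1, hxperp⟩ := rv_exists_unit_perp hinf (Set.finite_range e)
    have hperp : ∀ i : Fin n, ⟪e i, x⟫ = 0 := fun i => hxperp _ (Set.mem_range_self i)
    have hperp' : ∀ i : Fin n, ⟪x, e i⟫ = 0 := by
      intro i; rw [← inner_conj_symm, hperp i, map_zero]
    refine ⟨Fin.snoc e x, ?_, ?_⟩
    · intro i
      induction i using Fin.lastCases with
      | last => simpa using hx1
      | cast i => simpa using he.1 i
    · intro i j hij
      induction i using Fin.lastCases with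
      | last =>
        induction j using Fin.lastCases with
        | last => exact absurd rfl hij
        | cast j => simpa using hperp' j
      | cast i =>
        induction j using Fin.lastCases with
        | last => simpa using hperp i
        | cast j =>
          have hij' : i ≠ j := fun h => hij (by rw [h])
          simpa using he.2 hij'

lemma rv_norm_sub_unit (x y : H) (hx : ‖x‖ = 1) (hy : ‖y‖ = 1) :
    ‖x - y‖ = Real.sqrt (2 - 2 * RCLike.re ⟪x, y⟫) := by
  have h : ‖x - y‖ ^ 2 = 2 - 2 * RCLike.re ⟪x, y⟫ := by
    rw [norm_sub_sq (𝕜 := 𝕜), hx, hy]; ring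
  rw [← h, Real.sqrt_sq (norm_nonneg _)]

lemma rv_norm_sub_sqrt_two (x y : H) (hx : ‖x‖ = 1) (hy : ‖y‖ = 1) (h : ⟪y, x⟫ = 0) :
    ‖x - y‖ = Real.sqrt 2 := by
  have h2 : ‖x - y‖ ^ 2 = 2 - 2 * RCLike.re ⟪x, y⟫ := by
    rw [norm_sub_sq (𝕜 := 𝕜), hx, hy]; ring
  rw [inner_re_symm, h, map_zero] at h2
  rw [← Real.sqrt_sq (norm_nonneg (x - y)), h2]; norm_num

lemma rv_sum_norm_bounds {n : ℕ} {e : Fin n → H} (he : Orthonormal 𝕜 e) {x : H}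
    (hx : ‖x‖ = 1) :
    Real.sqrt 2 * n - Real.sqrt 2 * Real.sqrt n ≤ ∑ j, ‖x - e j‖ ∧
    ∑ j, ‖x - e j‖ ≤ Real.sqrt 2 * n + Real.sqrt 2 * Real.sqrt n / 2 := by
  set t : Fin n → ℝ := fun j => RCLike.re ⟪x, e j⟫ with htdef
  have ht1 : ∀ j, |t j| ≤ ‖⟪x, e j⟫‖ := fun j => RCLike.abs_re_le_norm _
  have hinner1 : ∀ j, ‖⟪x, e j⟫‖ ≤ 1 := by
    intro j
    have h := norm_inner_le_norm (𝕜 := 𝕜) x (e j)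
    rwa [hx, he.1 j, one_mul] at h
  have htle : ∀ j, t j ≤ 1 := fun j => le_trans (le_trans (le_abs_self _) (ht1 j)) (hinner1 j)
  have hbessel : ∑ j, t j ^ 2 ≤ 1 := by
    have h1 : ∑ j, ‖⟪e j, x⟫‖ ^ 2 ≤ ‖x‖ ^ 2 := he.sum_inner_products_le x
    rw [hx, one_pow] at h1
    refine le_trans (Finset.sum_le_sum fun j _ => ?_) h1
    rw [← sq_abs (t j), norm_inner_symm (𝕜 := 𝕜) (e j) x]
    exact pow_le_pow_left₀ (abs_nonneg _) (ht1 j) 2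
  have habs : ∑ j, |t j| ≤ Real.sqrt n := by
    have h2 : (∑ j, |t j|) ^ 2 ≤ (n : ℝ) * ∑ j, |t j| ^ 2 := by
      have := sq_sum_le_card_mul_sum_sq (s := (Finset.univ : Finset (Fin n)))
        (f := fun j => |t j|)
      simpa using this
    have h3 : (∑ j, |t j|) ^ 2 ≤ (n : ℝ) := by
      have h3' : ∑ j, |t j| ^ 2 ≤ 1 := by
        refine le_trans (le_of_eq ?_) hbessel
        exact Finset.sum_congr rfl fun j _ => by rw [sq_abs]
      nlinarith [Nat.cast_nonneg (α := ℝ) n]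
    have h4 : 0 ≤ ∑ j, |t j| := Finset.sum_nonneg fun j _ => abs_nonneg _
    exact (Real.le_sqrt h4 (Nat.cast_nonneg n)).mpr h3
  have hsumt : -Real.sqrt n ≤ ∑ j, t j := by
    have h5 : |∑ j, t j| ≤ ∑ j, |t j| := Finset.abs_sum_le_sum_abs _ _
    have h6 := neg_abs_le (∑ j, t j)
    linarith
  have hnorm : ∀ j, ‖x - e j‖ = Real.sqrt (2 - 2 * t j) :=
    fun j => rv_norm_sub_unit x (e j) hx (he.1 j)
  have hmax : ∑ j, max (t j) 0 ≤ Real.sqrt n := by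
    refine le_trans (Finset.sum_le_sum fun j _ => ?_) habs
    exact max_le (le_abs_self _) (abs_nonneg _)
  constructor
  · have hstep : ∑ j, Real.sqrt 2 * (1 - max (t j) 0) ≤ ∑ j, ‖x - e j‖ := by
      refine Finset.sum_le_sum fun j _ => ?_
      rw [hnorm j]; exact rv_sqrt_lb (htle j)
    have heq : ∑ j, Real.sqrt 2 * (1 - max (t j) 0)
        = Real.sqrt 2 * n - Real.sqrt 2 * ∑ j, max (t j) 0 := by
      rw [← Finset.mul_sum, Finset.sum_sub_distrib, Finset.sum_const, Finset.card_univ,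
        Fintype.card_fin, nsmul_eq_mul, mul_one, mul_sub]
    rw [heq] at hstep
    nlinarith [Real.sqrt_nonneg 2, hstep,
      mul_le_mul_of_nonneg_left hmax (Real.sqrt_nonneg 2)]
  · have hstep : ∑ j, ‖x - e j‖ ≤ ∑ j, Real.sqrt 2 * (1 - t j / 2) := by
      refine Finset.sum_le_sum fun j _ => ?_
      rw [hnorm j]; exact rv_sqrt_ub (htle j)
    have heq : ∑ j, Real.sqrt 2 * (1 - t j / 2)
        = Real.sqrt 2 * n - Real.sqrt 2 / 2 * ∑ j, t j := by
      rw [← Finset.mul_sum, Finset.sum_sub_distrib, Finset.sum_const, Finset.card_univ,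
        Fintype.card_fin, nsmul_eq_mul, mul_one, mul_sub]
      rw [← Finset.sum_div, div_mul_eq_mul_div, mul_div_assoc]
    have hfin : Real.sqrt 2 / 2 * (∑ j, t j) ≥ Real.sqrt 2 / 2 * (-Real.sqrt n) :=
      mul_le_mul_of_nonneg_left hsumt (by positivity)
    rw [heq] at hstep
    nlinarith [hstep, hfin]

lemma rv_avg_edist_eq {n : ℕ} (hn : 0 < n) (x : H) (w : Fin n → H) :
    (∑ j, edist x (w j)) / (n : ℝ≥0∞) = ENNReal.ofReal ((∑ j, ‖x - w j‖) / n) := by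
  have h1 : ∑ j, edist x (w j) = ENNReal.ofReal (∑ j, ‖x - w j‖) := by
    rw [ENNReal.ofReal_sum_of_nonneg (fun j _ => norm_nonneg _)]
    exact Finset.sum_congr rfl fun j _ => by rw [edist_dist, dist_eq_norm]
  rw [h1, ENNReal.ofReal_div_of_pos (by exact_mod_cast hn), ENNReal.ofReal_natCast]

lemma rv_avg_edist_perp {n : ℕ} (hn : 0 < n) {x : H} {w : Fin n → H}
    (hnorm : ∀ j, ‖x - w j‖ = Real.sqrt 2) :
    (∑ j, edist x (w j)) / (n : ℝ≥0∞) = ENNReal.ofReal (Real.sqrt 2) := by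
  rw [rv_avg_edist_eq hn]
  congr 1
  rw [Finset.sum_congr rfl fun j _ => hnorm j, Finset.sum_const, Finset.card_univ,
    Fintype.card_fin, nsmul_eq_mul]
  field_simp

lemma rv_avg_orthonormal_bounds {n : ℕ} (hn : 0 < n) {e : Fin n → H} (he : Orthonormal 𝕜 e)
    {x : H} (hx : ‖x‖ = 1) :
    ENNReal.ofReal (Real.sqrt 2 - Real.sqrt 2 / Real.sqrt n)
        ≤ (∑ j, edist x (e j)) / (n : ℝ≥0∞) ∧
    (∑ j, edist x (e j)) / (n : ℝ≥0∞)
        ≤ ENNReal.ofReal (Real.sqrt 2 + Real.sqrt 2 / Real.sqrt n) := by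
  obtain ⟨hl, hu⟩ := rv_sum_norm_bounds (𝕜 := 𝕜) he hx
  rw [rv_avg_edist_eq hn]
  have hnpos : (0:ℝ) < n := by exact_mod_cast hn
  have hspos : (0:ℝ) < Real.sqrt n := Real.sqrt_pos.mpr hnpos
  have hsq : Real.sqrt n * Real.sqrt n = (n:ℝ) := Real.mul_self_sqrt (Nat.cast_nonneg n)
  have hkey : Real.sqrt 2 / Real.sqrt n * (n : ℝ) = Real.sqrt 2 * Real.sqrt n := by
    calc Real.sqrt 2 / Real.sqrt n * (n : ℝ)
        = Real.sqrt 2 / Real.sqrt n * (Real.sqrt n * Real.sqrt n) := by rw [hsq]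
      _ = Real.sqrt 2 * Real.sqrt n := by
          field_simp
  constructor <;> apply ENNReal.ofReal_le_ofReal
  · rw [le_div_iff₀ hnpos]
    nlinarith [hl]
  · rw [div_le_iff₀ hnpos]
    nlinarith [hu, hspos.le, Real.sqrt_nonneg 2]

end InnerSpace

section MeasureAux

variable {H : Type*} [NormedAddCommGroup H] [MeasurableSpace H] [BorelSpace H]

lemma rv_discrete_tight {n : ℕ} (hn : 0 < n) {e : Fin n → H}
    (hes : ∀ j, e j ∈ Metric.sphere (0:H) 1) :
    TightProbOn ((n : ℝ≥0∞)⁻¹ • ∑ j : Fin n, MeasureTheory.Measure.dirac (e j))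
      (Metric.sphere (0:H) 1) ∧
    ∀ x : H, pot (fun a b => edist a b)
        ((n : ℝ≥0∞)⁻¹ • ∑ j : Fin n, MeasureTheory.Measure.dirac (e j)) x
      = (∑ j, edist x (e j)) / (n : ℝ≥0∞) := by
  classical
  have hn0 : (n : ℝ≥0∞) ≠ 0 := Nat.cast_ne_zero.mpr hn.ne'
  have hntop : (n : ℝ≥0∞) ≠ ⊤ := ENNReal.natCast_ne_top n
  set μ : Measure H := (n : ℝ≥0∞)⁻¹ • ∑ j : Fin n, Measure.dirac (e j) with hμdef
  have happly : ∀ s : Set H, μ s = (n : ℝ≥0∞)⁻¹ * ∑ j, Measure.dirac (e j) s := by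
    intro s
    rw [hμdef, Measure.smul_apply, smul_eq_mul, Measure.coe_finset_sum, Finset.sum_apply]
  refine ⟨⟨⟨?_⟩, ⟨?_⟩, ?_⟩, ?_⟩
  · rw [happly]
    have h1 : ∀ j : Fin n, Measure.dirac (e j) (Set.univ : Set H) = 1 := fun j => by simp
    rw [Finset.sum_congr rfl fun j _ => h1 j, Finset.sum_const, Finset.card_univ,
      Fintype.card_fin, nsmul_eq_mul, mul_one, ENNReal.inv_mul_cancel hn0 hntop]
  · intro U hU r hr
    set F := Set.range e with hF
    have hFfin : F.Finite := Set.finite_range e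
    have hFm : MeasurableSet F := hFfin.isClosed.measurableSet
    have hμeq : μ (U ∩ F) = μ U := by
      rw [happly, happly]
      congr 1
      refine Finset.sum_congr rfl fun j _ => ?_
      rw [Measure.dirac_apply' _ (hU.inter hFm), Measure.dirac_apply' _ hU]
      by_cases h : e j ∈ U
      · rw [Set.indicator_of_mem (Set.mem_inter h (Set.mem_range_self j)),
          Set.indicator_of_mem h]
      · rw [Set.indicator_of_notMem (fun hc => h (Set.mem_of_mem_inter_left hc)),
          Set.indicator_of_notMem h]
    exact ⟨U ∩ F, Set.inter_subset_left, ((hFfin.inter_of_right U).isCompact),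
      by rwa [hμeq]⟩
  · rw [happly]
    have h2 : ∀ j : Fin n, Measure.dirac (e j) (Metric.sphere (0:H) 1)ᶜ = 0 := by
      intro j
      rw [Measure.dirac_apply' _ (Metric.isClosed_sphere.measurableSet.compl)]
      exact Set.indicator_of_notMem (fun hc => (Set.mem_compl_iff _ _).mp hc (hes j)) _
    simp [h2]
  · intro x
    have hf : Measurable fun y : H => edist x y :=
      (continuous_const.edist continuous_id).measurable
    unfold pot
    rw [hμdef, lintegral_smul_measure, lintegral_finset_sum_measure,
      Finset.sum_congr rfl fun j _ => lintegral_dirac' (e j) hf, ENNReal.div_eq_inv_mul, smul_eq_mul]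

end MeasureAux

section TightAux

variable {𝕜 H : Type*} [RCLike 𝕜] [NormedAddCommGroup H] [InnerProductSpace 𝕜 H]
  [CompleteSpace H] [MeasurableSpace H] [BorelSpace H]

local notation "⟪" x ", " y "⟫" => @inner 𝕜 _ _ x y

lemma rv_tight_pot_bounds (hinf : ¬ FiniteDimensional 𝕜 H) {μ : Measure H}
    (hμ : TightProbOn μ (Metric.sphere (0:H) 1)) {ε : ℝ} (hε : 0 < ε) (hε1 : ε < 1) :
    ∃ x ∈ Metric.sphere (0:H) 1,
      ENNReal.ofReal ((Real.sqrt 2 - ε) * (1 - ε)) ≤ pot (fun a b => edist a b) μ x ∧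
      pot (fun a b => edist a b) μ x
        ≤ ENNReal.ofReal (Real.sqrt 2 + ε) + 2 * ENNReal.ofReal ε := by
  obtain ⟨hprob, hreg, hnull⟩ := hμ
  haveI := hprob
  set S := Metric.sphere (0:H) 1 with hSdef
  have hSmeas : MeasurableSet S := Metric.isClosed_sphere.measurableSet
  have hμS : μ S = 1 := by
    have h := measure_add_measure_compl (μ := μ) hSmeas
    rw [hnull, add_zero, measure_univ] at h
    exact h
  have hlt : ENNReal.ofReal (1 - ε) < μ S := by
    rw [hμS]; exact ENNReal.ofReal_lt_one.mpr (by linarith)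
  obtain ⟨K, hKS, hKcomp, hKμ⟩ := hreg.innerRegular hSmeas _ hlt
  obtain ⟨t, htK, htfin, htcover⟩ := totallyBounded_iff_subset.mp hKcomp.totallyBounded
    _ (Metric.dist_mem_uniformity hε)
  obtain ⟨x, hx1, hxperp⟩ := rv_exists_unit_perp (𝕜 := 𝕜) hinf htfin
  have hxS : x ∈ S := mem_sphere_zero_iff_norm.mpr hx1
  have hdist : ∀ y ∈ K, Real.sqrt 2 - ε ≤ ‖x - y‖ ∧ ‖x - y‖ ≤ Real.sqrt 2 + ε := by
    intro y hy
    have hymem := htcover hy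
    simp only [Set.mem_iUnion] at hymem
    obtain ⟨c, hct, hyc⟩ := hymem
    have hycd : dist y c < ε := hyc
    have hc1 : ‖c‖ = 1 := mem_sphere_zero_iff_norm.mp (hKS (htK hct))
    have hxc : dist x c = Real.sqrt 2 := by
      rw [dist_eq_norm]; exact rv_norm_sub_sqrt_two x c hx1 hc1 (hxperp c hct)
    have htri := abs_dist_sub_le y c x
    rw [dist_comm y x, dist_comm c x] at htri
    rw [← dist_eq_norm]
    have h1 := (abs_le.mp htri).1
    have h2 := (abs_le.mp htri).2
    constructor
    · linarith
    · linarith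
  have hf : Measurable fun y : H => edist x y :=
    (continuous_const.edist continuous_id).measurable
  have hKm : MeasurableSet K := hKcomp.isClosed.measurableSet
  have hsplit : pot (fun a b => edist a b) μ x
      = (∫⁻ y in K, edist x y ∂μ) + ∫⁻ y in Kᶜ, edist x y ∂μ := by
    unfold pot
    rw [lintegral_add_compl _ hKm]
  have hμKc : μ Kᶜ ≤ ENNReal.ofReal ε := by
    have h1 : μ Kᶜ = 1 - μ K := by
      rw [measure_compl hKm (measure_ne_top μ K), measure_univ]
    rw [h1]
    calc 1 - μ K ≤ 1 - ENNReal.ofReal (1-ε) := tsub_le_tsub_left hKμ.le 1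
      _ = ENNReal.ofReal ε := by
          have hring : (1:ℝ) - (1 - ε) = ε := by ring
          rw [← ENNReal.ofReal_one,
            ← ENNReal.ofReal_sub _ (by linarith : (0:ℝ) ≤ 1 - ε), hring]
  have hμK1 : μ K ≤ 1 := prob_le_one
  refine ⟨x, hxS, ?_, ?_⟩
  · have h2 : ENNReal.ofReal (Real.sqrt 2 - ε) * ENNReal.ofReal (1 - ε)
        ≤ ENNReal.ofReal (Real.sqrt 2 - ε) * μ K :=
      mul_le_mul_right hKμ.le _
    have h3 : ENNReal.ofReal (Real.sqrt 2 - ε) * μ K ≤ ∫⁻ y in K, edist x y ∂μ := by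
      have hc : ∫⁻ _ in K, ENNReal.ofReal (Real.sqrt 2 - ε) ∂μ
          = ENNReal.ofReal (Real.sqrt 2 - ε) * μ K := setLIntegral_const K _
      rw [← hc]
      refine setLIntegral_mono hf fun y hy => ?_
      rw [edist_dist, dist_eq_norm]
      exact ENNReal.ofReal_le_ofReal (hdist y hy).1
    calc ENNReal.ofReal ((Real.sqrt 2 - ε) * (1 - ε))
        = ENNReal.ofReal (Real.sqrt 2 - ε) * ENNReal.ofReal (1 - ε) :=
          ENNReal.ofReal_mul (by linarith [rv_one_le_sqrt2])
      _ ≤ ∫⁻ y in K, edist x y ∂μ := le_trans h2 h3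
      _ ≤ pot (fun a b => edist a b) μ x := by rw [hsplit]; exact le_self_add
  · have h4 : ∫⁻ y in K, edist x y ∂μ ≤ ENNReal.ofReal (Real.sqrt 2 + ε) := by
      calc ∫⁻ y in K, edist x y ∂μ ≤ ∫⁻ _ in K, ENNReal.ofReal (Real.sqrt 2 + ε) ∂μ := by
            refine setLIntegral_mono measurable_const fun y hy => ?_
            rw [edist_dist, dist_eq_norm]
            exact ENNReal.ofReal_le_ofReal (hdist y hy).2
        _ = ENNReal.ofReal (Real.sqrt 2 + ε) * μ K := setLIntegral_const K _
        _ ≤ ENNReal.ofReal (Real.sqrt 2 + ε) * 1 := by gcongr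
        _ = ENNReal.ofReal (Real.sqrt 2 + ε) := mul_one _
    have h5 : ∫⁻ y in Kᶜ, edist x y ∂μ ≤ 2 * ENNReal.ofReal ε := by
      have hae : ∀ᵐ y ∂μ.restrict Kᶜ, edist x y ≤ 2 := by
        have hS' : ∀ᵐ y ∂μ, y ∈ S := by
          rw [MeasureTheory.ae_iff]
          exact hnull
        filter_upwards [ae_restrict_of_ae hS'] with y hyS
        have hy1 : ‖y‖ = 1 := mem_sphere_zero_iff_norm.mp hyS
        rw [edist_dist, dist_eq_norm]
        calc ENNReal.ofReal ‖x - y‖ ≤ ENNReal.ofReal 2 :=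
              ENNReal.ofReal_le_ofReal (by
                calc ‖x - y‖ ≤ ‖x‖ + ‖y‖ := norm_sub_le x y
                  _ = 2 := by rw [hx1, hy1]; norm_num)
          _ = 2 := ENNReal.ofReal_ofNat 2
      calc ∫⁻ y in Kᶜ, edist x y ∂μ ≤ ∫⁻ _ in Kᶜ, 2 ∂μ := lintegral_mono_ae hae
        _ = 2 * μ Kᶜ := setLIntegral_const Kᶜ 2
        _ ≤ 2 * ENNReal.ofReal ε := by gcongr
    calc pot (fun a b => edist a b) μ x
        = (∫⁻ y in K, edist x y ∂μ) + ∫⁻ y in Kᶜ, edist x y ∂μ := hsplit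
      _ ≤ ENNReal.ofReal (Real.sqrt 2 + ε) + 2 * ENNReal.ofReal ε := add_le_add h4 h5

end TightAux

end RendezvousAux

/-- Wolf, Lin: For an infinite dimensional Hilbert space `H` over ℝ or
ℂ, with the kernel `k(x,y) = ‖x-y‖` on the unit sphere `S_H`, the rendezvous and
average intervals of `S_H` both reduce to the single point `√2`:
`𝓐(H) = 𝓡(H) = {√2}`. -/
theorem hilbert_rendezvous_eq_sqrt_two {𝕜 H : Type*} [RCLike 𝕜]
    [NormedAddCommGroup H] [InnerProductSpace 𝕜 H] [CompleteSpace H]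
    [MeasurableSpace H] [BorelSpace H] (hinf : ¬ FiniteDimensional 𝕜 H) :
    chebM (fun x y : H => edist x y) (Metric.sphere (0 : H) 1) (Metric.sphere (0 : H) 1)
        = ENNReal.ofReal (Real.sqrt 2) ∧
    chebMDual (fun x y : H => edist x y) (Metric.sphere (0 : H) 1) (Metric.sphere (0 : H) 1)
        = ENNReal.ofReal (Real.sqrt 2) ∧
    qLow (fun x y : H => edist x y) (Metric.sphere (0 : H) 1) (Metric.sphere (0 : H) 1)
        = ENNReal.ofReal (Real.sqrt 2) ∧
    qUp (fun x y : H => edist x y) (Metric.sphere (0 : H) 1) (Metric.sphere (0 : H) 1)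
        = ENNReal.ofReal (Real.sqrt 2) := by
  classical
  have hperp_val : ∀ (n : ℕ), 0 < n → ∀ w : Fin n → (Metric.sphere (0:H) 1),
      ∃ x : (Metric.sphere (0:H) 1),
        (∑ j, edist (x:H) ((w j : H))) / (n:ℝ≥0∞) = ENNReal.ofReal (Real.sqrt 2) := by
    intro n hn w
    obtain ⟨x, hx1, hxperp⟩ := rv_exists_unit_perp (𝕜 := 𝕜) hinf
      (Set.finite_range fun j => (w j : H))
    refine ⟨⟨x, mem_sphere_zero_iff_norm.mpr hx1⟩, ?_⟩
    refine rv_avg_edist_perp hn ?_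
    intro j
    exact rv_norm_sub_sqrt_two (𝕜 := 𝕜) x (w j) hx1 (mem_sphere_zero_iff_norm.mp (w j).2)
      (hxperp _ (Set.mem_range_self j))
  have hON : ∀ ε : ℝ, 0 < ε → ∃ (n : ℕ), 0 < n ∧ ∃ (e : Fin n → H), Orthonormal 𝕜 e ∧
      (∀ j, e j ∈ Metric.sphere (0:H) 1) ∧ Real.sqrt 2 / Real.sqrt n ≤ ε := by
    intro ε hε
    obtain ⟨n, hn1, hnε⟩ := rv_exists_n_sqrt ε hε
    obtain ⟨e, he⟩ := rv_exists_orthonormal (𝕜 := 𝕜) hinf n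
    exact ⟨n, hn1, e, he, fun j => mem_sphere_zero_iff_norm.mpr (he.1 j), hnε⟩
  have hM_le : chebM (fun x y : H => edist x y) (Metric.sphere (0 : H) 1)
      (Metric.sphere (0 : H) 1) ≤ ENNReal.ofReal (Real.sqrt 2) := by
    simp only [chebM, chebMn]
    refine iSup_le fun n => iSup_le fun hn => iSup_le fun w => ?_
    obtain ⟨x, hx⟩ := hperp_val n hn w
    exact le_trans (iInf_le _ x) (le_of_eq hx)
  have hM_ge : ENNReal.ofReal (Real.sqrt 2) ≤ chebM (fun x y : H => edist x y)
      (Metric.sphere (0 : H) 1) (Metric.sphere (0 : H) 1) := by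
    refine rv_helper_lb fun ε hε hε1 => ?_
    obtain ⟨n, hn, e, he, heS, hnε⟩ := hON ε hε
    have hstep : ENNReal.ofReal (Real.sqrt 2 - ε)
        ≤ ⨅ x : (Metric.sphere (0:H) 1), (∑ j, edist (x:H) (e j)) / (n:ℝ≥0∞) :=
      le_iInf fun x => le_trans (ENNReal.ofReal_le_ofReal (by linarith))
        (rv_avg_orthonormal_bounds hn he (mem_sphere_zero_iff_norm.mp x.2)).1
    have hstep2 : ENNReal.ofReal (Real.sqrt 2 - ε) ≤ chebMn (fun x y : H => edist x y) n
        (Metric.sphere (0 : H) 1) (Metric.sphere (0 : H) 1) := by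
      simp only [chebMn]
      exact le_trans hstep (le_iSup (fun w : Fin n → (Metric.sphere (0:H) 1) =>
        ⨅ x : (Metric.sphere (0:H) 1), (∑ j, edist (x:H) ((w j : H))) / (n:ℝ≥0∞))
        (fun j => ⟨e j, heS j⟩))
    have hn' : 1 ≤ n := hn
    simp only [chebM]
    exact le_trans hstep2 (le_iSup₂ (f := fun (m : ℕ) (_ : 1 ≤ m) =>
      chebMn (fun x y : H => edist x y) m (Metric.sphere (0:H) 1) (Metric.sphere (0:H) 1))
      n hn')
  have hMd_ge : ENNReal.ofReal (Real.sqrt 2) ≤ chebMDual (fun x y : H => edist x y)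
      (Metric.sphere (0 : H) 1) (Metric.sphere (0 : H) 1) := by
    simp only [chebMDual, chebMnDual]
    refine le_iInf fun n => le_iInf fun hn => le_iInf fun w => ?_
    obtain ⟨x, hx⟩ := hperp_val n hn w
    exact le_trans (le_of_eq hx.symm)
      (le_iSup (fun x : (Metric.sphere (0:H) 1) =>
        (∑ j, edist (x:H) ((w j : H))) / (n:ℝ≥0∞)) x)
  have hMd_le : chebMDual (fun x y : H => edist x y) (Metric.sphere (0 : H) 1)
      (Metric.sphere (0 : H) 1) ≤ ENNReal.ofReal (Real.sqrt 2) := by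
    refine rv_helper_ub fun ε hε hε1 => ?_
    obtain ⟨n, hn, e, he, heS, hnε⟩ := hON ε hε
    have hstep2 : chebMnDual (fun x y : H => edist x y) n (Metric.sphere (0 : H) 1)
        (Metric.sphere (0 : H) 1) ≤ ENNReal.ofReal (Real.sqrt 2 + ε) := by
      simp only [chebMnDual]
      refine le_trans (iInf_le _ (fun j => (⟨e j, heS j⟩ : (Metric.sphere (0:H) 1)))) ?_
      refine iSup_le fun x => le_trans
        (rv_avg_orthonormal_bounds hn he (mem_sphere_zero_iff_norm.mp x.2)).2
        (ENNReal.ofReal_le_ofReal (by linarith))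
    have hn' : 1 ≤ n := hn
    simp only [chebMDual]
    exact le_trans (iInf₂_le (f := fun (m : ℕ) (_ : 1 ≤ m) =>
      chebMnDual (fun x y : H => edist x y) m (Metric.sphere (0:H) 1) (Metric.sphere (0:H) 1))
      n hn') hstep2
  have hqL_ge : ENNReal.ofReal (Real.sqrt 2) ≤ qLow (fun x y : H => edist x y)
      (Metric.sphere (0 : H) 1) (Metric.sphere (0 : H) 1) := by
    refine rv_helper_lb fun ε hε hε1 => ?_
    obtain ⟨n, hn, e, he, heS, hnε⟩ := hON ε hε
    obtain ⟨htight, hpot⟩ := rv_discrete_tight hn heS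
    have hstep : ENNReal.ofReal (Real.sqrt 2 - ε)
        ≤ ⨅ x : (Metric.sphere (0:H) 1), pot (fun x y : H => edist x y)
            ((n : ℝ≥0∞)⁻¹ • ∑ j : Fin n, MeasureTheory.Measure.dirac (e j)) (x:H) := by
      refine le_iInf fun x => ?_
      rw [hpot]
      exact le_trans (ENNReal.ofReal_le_ofReal (by linarith))
        (rv_avg_orthonormal_bounds hn he (mem_sphere_zero_iff_norm.mp x.2)).1
    simp only [qLow]
    exact le_trans hstep
      (le_iSup₂ (f := fun (μ : MeasureTheory.Measure H)
          (_ : TightProbOn μ (Metric.sphere (0:H) 1)) =>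
          ⨅ x : (Metric.sphere (0:H) 1), pot (fun x y : H => edist x y) μ (x:H))
        ((n : ℝ≥0∞)⁻¹ • ∑ j : Fin n, MeasureTheory.Measure.dirac (e j)) htight)
  have hqL_le : qLow (fun x y : H => edist x y) (Metric.sphere (0 : H) 1)
      (Metric.sphere (0 : H) 1) ≤ ENNReal.ofReal (Real.sqrt 2) := by
    refine rv_helper_ub fun ε hε hε1 => ?_
    simp only [qLow]
    refine iSup_le fun μ => iSup_le fun hμ => ?_
    obtain ⟨x, hxS, hlow, hup⟩ := rv_tight_pot_bounds hinf hμ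
      (show 0 < ε/3 by linarith) (show ε/3 < 1 by linarith)
    refine le_trans (iInf_le _ (⟨x, hxS⟩ : (Metric.sphere (0:H) 1))) ?_
    refine le_trans hup ?_
    have h2 : (2:ℝ≥0∞) * ENNReal.ofReal (ε/3) = ENNReal.ofReal (2*(ε/3)) := by
      rw [ENNReal.ofReal_mul (by norm_num : (0:ℝ) ≤ 2), ENNReal.ofReal_ofNat]
    rw [h2, ← ENNReal.ofReal_add (by positivity) (by positivity)]
    exact ENNReal.ofReal_le_ofReal (by linarith)
  have hq_ge : ENNReal.ofReal (Real.sqrt 2) ≤ qUp (fun x y : H => edist x y)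
      (Metric.sphere (0 : H) 1) (Metric.sphere (0 : H) 1) := by
    refine rv_helper_lb fun ε hε hε1 => ?_
    simp only [qUp]
    refine le_iInf fun μ => le_iInf fun hμ => ?_
    obtain ⟨x, hxS, hlow, hup⟩ := rv_tight_pot_bounds hinf hμ
      (show 0 < ε/3 by linarith) (show ε/3 < 1 by linarith)
    refine le_trans ?_ (le_iSup _ (⟨x, hxS⟩ : (Metric.sphere (0:H) 1)))
    refine le_trans ?_ hlow
    refine ENNReal.ofReal_le_ofReal ?_
    nlinarith [rv_sqrt2_le_two, sq_nonneg ε]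
  have hq_le : qUp (fun x y : H => edist x y) (Metric.sphere (0 : H) 1)
      (Metric.sphere (0 : H) 1) ≤ ENNReal.ofReal (Real.sqrt 2) := by
    refine rv_helper_ub fun ε hε hε1 => ?_
    obtain ⟨n, hn, e, he, heS, hnε⟩ := hON ε hε
    obtain ⟨htight, hpot⟩ := rv_discrete_tight hn heS
    have hstep : (⨆ x : (Metric.sphere (0:H) 1), pot (fun x y : H => edist x y)
          ((n : ℝ≥0∞)⁻¹ • ∑ j : Fin n, MeasureTheory.Measure.dirac (e j)) (x:H))
        ≤ ENNReal.ofReal (Real.sqrt 2 + ε) := by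
      refine iSup_le fun x => ?_
      rw [hpot]
      exact le_trans
        (rv_avg_orthonormal_bounds hn he (mem_sphere_zero_iff_norm.mp x.2)).2
        (ENNReal.ofReal_le_ofReal (by linarith))
    simp only [qUp]
    exact le_trans
      (iInf₂_le (f := fun (μ : MeasureTheory.Measure H)
          (_ : TightProbOn μ (Metric.sphere (0:H) 1)) =>
          ⨆ x : (Metric.sphere (0:H) 1), pot (fun x y : H => edist x y) μ (x:H))
        ((n : ℝ≥0∞)⁻¹ • ∑ j : Fin n, MeasureTheory.Measure.dirac (e j)) htight)
      hstep
  exact ⟨le_antisymm hM_le hM_ge, le_antisymm hMd_le hMd_ge,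
    le_antisymm hqL_le hqL_ge, le_antisymm hq_le hq_ge⟩
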